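/- Let (I)_{I ∈ 𝓘} be a finite family of pairwise disjoint intervals in ℝ, each satisfying (1/|I|)∫_ℝ 1_F(x) χ̃_I(x) dx ≥ 2^{-n} for a fixed measurable set F of finite measure and χ̃_I(x) = (1+dist(x,I)/|I|)^{-10}. Then every I ∈ 𝓘 is contained in {x : M(1_F)(x) ≥ c·2^{-n}} for an absolute constant c > 0, and consequently ∑_{I∈𝓘} |I| ≤ C · 2^n |F|. -/

import Mathlib

open MeasureTheory

/-- The Hardy–Littlewood maximal function over intervals on `ℝ`. -/
noncomputable def hlMaximal (g : ℝ → ℝ) (y : ℝ) : ℝ :=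
  ⨆ (p : ℝ × ℝ) (_ : p.1 < p.2) (_ : y ∈ Set.Icc p.1 p.2),
    (p.2 - p.1)⁻¹ * ∫ x in Set.Icc p.1 p.2, |g x|


lemma aux_real (k : ℕ) :
    ((((k:ℝ)+1)^(10:ℕ))⁻¹) * ((1/12) * (2*(k:ℝ)+3)) ≤
      (1/2) * (((k:ℝ)+1)⁻¹ - ((k:ℝ)+2)⁻¹) := by
  have hk : (0:ℝ) ≤ (k:ℝ) := Nat.cast_nonneg k
  have h1 : ((k:ℝ)+1)⁻¹ - ((k:ℝ)+2)⁻¹ = (((k:ℝ)+1)*((k:ℝ)+2))⁻¹ := by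
    rw [inv_sub_inv (by positivity) (by positivity)]
    ring_nf
  have h2 : (1/2 : ℝ) * (((k:ℝ)+1)*((k:ℝ)+2))⁻¹ = 1 / (2*(((k:ℝ)+1)*((k:ℝ)+2))) := by
    field_simp
  rw [h1, h2, mul_comm, ← div_eq_mul_inv, div_le_div_iff₀ (by positivity) (by positivity)]
  have h3 : ((k:ℝ)+1)^3 ≤ ((k:ℝ)+1)^10 := pow_le_pow_right₀ (by linarith) (by norm_num)
  nlinarith [h3, sq_nonneg ((k:ℝ)+1), hk]


lemma lemA (F : Set ℝ) (hF : MeasurableSet F) (hFfin : volume F < ⊤)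
    (a b : ℝ) (hab : a < b) (t : ℝ) (ht : 0 < t)
    (h : t ≤ (b - a)⁻¹ * ∫ x : ℝ, F.indicator (fun _ => (1:ℝ)) x *
        (1 + Metric.infDist x (Set.Icc a b) / (b - a)) ^ (-(10:ℝ))) :
    ∃ k : ℕ, 1/12 * t * ((2*(k:ℝ)+3) * (b - a)) ≤
      (volume (F ∩ Set.Icc (a - ((k:ℝ)+1)*(b-a)) (b + ((k:ℝ)+1)*(b-a)))).toReal := by
  by_contra hcon
  push_neg at hcon
  have hL0 : 0 < b - a := sub_pos.2 hab
  set f : ℝ → ℝ := fun x => F.indicator (fun _ => (1:ℝ)) x *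
      (1 + Metric.infDist x (Set.Icc a b) / (b - a)) ^ (-(10:ℝ)) with hfdef
  set J : ℕ → Set ℝ := fun k => Set.Icc (a - ((k:ℝ)+1)*(b-a)) (b + ((k:ℝ)+1)*(b-a)) with hJ
  have hw0 : ∀ x : ℝ, (0:ℝ) < 1 + Metric.infDist x (Set.Icc a b) / (b - a) := by
    intro x
    have h1 : 0 ≤ Metric.infDist x (Set.Icc a b) := Metric.infDist_nonneg
    positivity
  have hwle : ∀ x : ℝ, (1 + Metric.infDist x (Set.Icc a b) / (b - a)) ^ (-(10:ℝ)) ≤ 1 := by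
    intro x
    have h1 : 0 ≤ Metric.infDist x (Set.Icc a b) := Metric.infDist_nonneg
    have h2 : 0 ≤ Metric.infDist x (Set.Icc a b) / (b - a) := by positivity
    exact Real.rpow_le_one_of_one_le_of_nonpos (by linarith) (by norm_num)
  have hf_nonneg : ∀ x, 0 ≤ f x := by
    intro x
    have := (hw0 x).le
    exact mul_nonneg (Set.indicator_nonneg (fun _ _ => zero_le_one) x)
      (Real.rpow_nonneg (by positivity) _)
  have hmeas : Measurable f := by
    apply Measurable.mul
    · exact measurable_const.indicator hF
    · apply Continuous.measurable
      apply Continuous.rpow_const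
      · exact (continuous_const.add ((Metric.continuous_infDist_pt _).div_const _))
      · exact fun x => Or.inl (hw0 x).ne'
  have hind_int : Integrable (F.indicator (fun _ => (1:ℝ))) := by
    rw [integrable_indicator_iff hF]
    exact integrableOn_const hFfin.ne
  have hf_int : Integrable f := by
    apply hind_int.mono' hmeas.aestronglyMeasurable
    refine Filter.Eventually.of_forall fun x => ?_
    rw [Real.norm_eq_abs, abs_of_nonneg (hf_nonneg x)]
    calc f x ≤ F.indicator (fun _ => (1:ℝ)) x * 1 :=
      mul_le_mul_of_nonneg_left (hwle x) (Set.indicator_nonneg (fun _ _ => zero_le_one) x)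
    _ = _ := mul_one _
  have key1 : ENNReal.ofReal ((b-a) * t) ≤ ∫⁻ x, ENNReal.ofReal (f x) := by
    rw [← ofReal_integral_eq_lintegral_ofReal hf_int (Filter.Eventually.of_forall hf_nonneg)]
    apply ENNReal.ofReal_le_ofReal
    calc (b-a) * t ≤ (b-a) * ((b - a)⁻¹ * ∫ x, f x) := mul_le_mul_of_nonneg_left h hL0.le
    _ = ∫ x, f x := by field_simp
  have hptwise : ∀ x, ENNReal.ofReal (f x) ≤
      ∑' k : ℕ, (F ∩ J k).indicator (fun _ => ENNReal.ofReal ((((k:ℝ)+1)^(10:ℕ))⁻¹)) x := by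
    intro x
    by_cases hx : x ∈ F
    · set d := Metric.infDist x (Set.Icc a b) with hd
      have hd0 : 0 ≤ d := Metric.infDist_nonneg
      set k0 := ⌊d / (b-a)⌋₊ with hk0
      have hxJ : x ∈ J k0 := by
        have hlt : d < ((k0:ℝ)+1) * (b-a) := by
          have h1 := Nat.lt_floor_add_one (d / (b-a))
          calc d = d / (b-a) * (b-a) := by field_simp
          _ < ((k0:ℝ)+1)*(b-a) := by exact mul_lt_mul_of_pos_right h1 hL0
        rcases (Metric.infDist_lt_iff (Set.nonempty_Icc.2 hab.le)).1 hlt with ⟨y, hy, hxy⟩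
        rw [Real.dist_eq, abs_lt] at hxy
        simp only [hJ, Set.mem_Icc]
        rcases hy with ⟨hy1, hy2⟩
        constructor <;> nlinarith
      refine le_trans ?_ (ENNReal.le_tsum k0)
      rw [Set.indicator_of_mem (show x ∈ F ∩ J k0 from ⟨hx, hxJ⟩)]
      apply ENNReal.ofReal_le_ofReal
      have hfx : f x = (1 + d / (b-a)) ^ (-(10:ℝ)) := by
        simp [hfdef, Set.indicator_of_mem hx, hd]
      rw [hfx]
      have hKle : (k0:ℝ) + 1 ≤ 1 + d / (b-a) := by
        have := Nat.floor_le (div_nonneg hd0 hL0.le)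
        linarith
      have hb0 : (0:ℝ) < 1 + d / (b-a) := hw0 x
      calc (1 + d/(b-a)) ^ (-(10:ℝ)) = ((1 + d/(b-a)) ^ (10:ℕ))⁻¹ := by
            rw [← Real.rpow_natCast (1 + d/(b-a)) 10, ← Real.rpow_neg hb0.le]
            norm_num
      _ ≤ (((k0:ℝ)+1) ^ (10:ℕ))⁻¹ := by
            apply inv_anti₀ (by positivity)
            exact pow_le_pow_left₀ (by positivity) hKle 10
    · simp [hfdef, Set.indicator_of_notMem hx]
  have key2 : ∫⁻ x, ENNReal.ofReal (f x) ≤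
      ∑' k : ℕ, ENNReal.ofReal ((((k:ℝ)+1)^(10:ℕ))⁻¹) * volume (F ∩ J k) := by
    calc ∫⁻ x, ENNReal.ofReal (f x)
        ≤ ∫⁻ x, ∑' k : ℕ, (F ∩ J k).indicator (fun _ => ENNReal.ofReal ((((k:ℝ)+1)^(10:ℕ))⁻¹)) x :=
          lintegral_mono hptwise
    _ = ∑' k : ℕ, ∫⁻ x, (F ∩ J k).indicator (fun _ => ENNReal.ofReal ((((k:ℝ)+1)^(10:ℕ))⁻¹)) x :=
          lintegral_tsum fun k => (measurable_const.indicator (hF.inter measurableSet_Icc)).aemeasurable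
    _ = ∑' k : ℕ, ENNReal.ofReal ((((k:ℝ)+1)^(10:ℕ))⁻¹) * volume (F ∩ J k) :=
          tsum_congr fun k => lintegral_indicator_const (hF.inter measurableSet_Icc) _
  have key3 : ∑' k : ℕ, ENNReal.ofReal ((((k:ℝ)+1)^(10:ℕ))⁻¹) * volume (F ∩ J k)
      ≤ ENNReal.ofReal (1/2 * t * (b-a)) := by
    have hterm : ∀ k : ℕ, ENNReal.ofReal ((((k:ℝ)+1)^(10:ℕ))⁻¹) * volume (F ∩ J k)
        ≤ ENNReal.ofReal (1/2 * t * (b-a) * (((k:ℝ)+1)⁻¹ - ((k:ℝ)+2)⁻¹)) := by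
      intro k
      have hfin : volume (F ∩ J k) ≠ ⊤ :=
        (lt_of_le_of_lt (measure_mono Set.inter_subset_left) hFfin).ne
      have hμ : volume (F ∩ J k) ≤ ENNReal.ofReal (1/12 * t * ((2*(k:ℝ)+3)*(b-a))) := by
        rw [← ENNReal.ofReal_toReal hfin]
        exact ENNReal.ofReal_le_ofReal (hcon k).le
      calc ENNReal.ofReal ((((k:ℝ)+1)^(10:ℕ))⁻¹) * volume (F ∩ J k)
          ≤ ENNReal.ofReal ((((k:ℝ)+1)^(10:ℕ))⁻¹) * ENNReal.ofReal (1/12 * t * ((2*(k:ℝ)+3)*(b-a))) :=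
            mul_le_mul_right hμ _
      _ = ENNReal.ofReal ((((k:ℝ)+1)^(10:ℕ))⁻¹ * (1/12 * t * ((2*(k:ℝ)+3)*(b-a)))) :=
            (ENNReal.ofReal_mul (by positivity)).symm
      _ ≤ ENNReal.ofReal (1/2 * t * (b-a) * (((k:ℝ)+1)⁻¹ - ((k:ℝ)+2)⁻¹)) := by
            apply ENNReal.ofReal_le_ofReal
            have haux := aux_real k
            have h2 := mul_le_mul_of_nonneg_left haux (show (0:ℝ) ≤ t * (b-a) by positivity)
            calc ((((k:ℝ)+1)^(10:ℕ))⁻¹ * (1/12 * t * ((2*(k:ℝ)+3)*(b-a))))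
                = t * (b-a) * (((((k:ℝ)+1)^(10:ℕ))⁻¹) * ((1/12) * (2*(k:ℝ)+3))) := by ring
            _ ≤ t * (b-a) * ((1/2) * (((k:ℝ)+1)⁻¹ - ((k:ℝ)+2)⁻¹)) := h2
            _ = 1/2 * t * (b-a) * (((k:ℝ)+1)⁻¹ - ((k:ℝ)+2)⁻¹) := by ring
    calc ∑' k : ℕ, ENNReal.ofReal ((((k:ℝ)+1)^(10:ℕ))⁻¹) * volume (F ∩ J k)
        ≤ ∑' k : ℕ, ENNReal.ofReal (1/2 * t * (b-a) * (((k:ℝ)+1)⁻¹ - ((k:ℝ)+2)⁻¹)) :=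
          ENNReal.tsum_le_tsum hterm
    _ ≤ ENNReal.ofReal (1/2 * t * (b-a)) := by
        apply Summable.tsum_le_of_sum_le ENNReal.summable
        intro s
        obtain ⟨N, hN⟩ := s.exists_nat_subset_range
        have hnn : ∀ i : ℕ, 0 ≤ 1/2 * t * (b-a) * (((i:ℝ)+1)⁻¹ - ((i:ℝ)+2)⁻¹) := by
          intro i
          have : ((i:ℝ)+2)⁻¹ ≤ ((i:ℝ)+1)⁻¹ := by
            apply inv_anti₀ (by positivity) (by linarith)
          have h0 : (0:ℝ) ≤ 1/2 * t * (b-a) := by positivity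
          nlinarith
        calc ∑ i ∈ s, ENNReal.ofReal (1/2 * t * (b-a) * (((i:ℝ)+1)⁻¹ - ((i:ℝ)+2)⁻¹))
            ≤ ∑ i ∈ Finset.range N, ENNReal.ofReal (1/2 * t * (b-a) * (((i:ℝ)+1)⁻¹ - ((i:ℝ)+2)⁻¹)) :=
              Finset.sum_le_sum_of_subset hN
        _ = ENNReal.ofReal (∑ i ∈ Finset.range N, 1/2 * t * (b-a) * (((i:ℝ)+1)⁻¹ - ((i:ℝ)+2)⁻¹)) :=
              (ENNReal.ofReal_sum_of_nonneg (fun i _ => hnn i)).symm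
        _ ≤ ENNReal.ofReal (1/2 * t * (b-a)) := by
              apply ENNReal.ofReal_le_ofReal
              have htel : ∑ i ∈ Finset.range N, (((i:ℝ)+1)⁻¹ - ((i:ℝ)+2)⁻¹) = 1 - ((N:ℝ)+1)⁻¹ := by
                calc ∑ i ∈ Finset.range N, (((i:ℝ)+1)⁻¹ - ((i:ℝ)+2)⁻¹)
                    = ∑ i ∈ Finset.range N, ((fun j : ℕ => ((j:ℝ)+1)⁻¹) i - (fun j : ℕ => ((j:ℝ)+1)⁻¹) (i+1)) := by
                      apply Finset.sum_congr rfl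
                      intro i _
                      push_cast
                      ring_nf
                _ = (fun j : ℕ => ((j:ℝ)+1)⁻¹) 0 - (fun j : ℕ => ((j:ℝ)+1)⁻¹) N :=
                      Finset.sum_range_sub' _ N
                _ = 1 - ((N:ℝ)+1)⁻¹ := by norm_num
              rw [← Finset.mul_sum, htel]
              have hpos : (0:ℝ) ≤ ((N:ℝ)+1)⁻¹ := by positivity
              have h0 : (0:ℝ) ≤ 1/2 * t * (b-a) := by positivity
              nlinarith
  have hfinal := le_trans key1 (le_trans key2 key3)
  rw [ENNReal.ofReal_le_ofReal_iff (by positivity)] at hfinal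
  nlinarith [mul_pos ht hL0]



lemma lemB (F : Set ℝ) (hF : MeasurableSet F) {A B y : ℝ} (hAB : A < B) (hy : y ∈ Set.Icc A B) :
    (B - A)⁻¹ * (volume (F ∩ Set.Icc A B)).toReal ≤
      hlMaximal (F.indicator (fun _ => (1:ℝ))) y := by
  have hval : ∀ p : ℝ × ℝ,
      (∫ x in Set.Icc p.1 p.2, |F.indicator (fun _ => (1:ℝ)) x|) =
        (volume (F ∩ Set.Icc p.1 p.2)).toReal := by
    intro p
    have habs : (fun x => |F.indicator (fun _ => (1:ℝ)) x|) = F.indicator (fun _ => (1:ℝ)) := by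
      funext x
      exact abs_of_nonneg (Set.indicator_nonneg (fun _ _ => zero_le_one) x)
    rw [habs, setIntegral_indicator hF, setIntegral_const]
    rw [Set.inter_comm]
    simp
    rfl
  have hbdd : BddAbove (Set.range fun p : ℝ × ℝ =>
      ⨆ (_ : p.1 < p.2) (_ : y ∈ Set.Icc p.1 p.2),
        (p.2 - p.1)⁻¹ * ∫ x in Set.Icc p.1 p.2, |F.indicator (fun _ => (1:ℝ)) x|) := by
    refine ⟨1, ?_⟩
    rintro v ⟨p, rfl⟩
    dsimp only
    by_cases h1 : p.1 < p.2
    · rw [ciSup_pos h1]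
      by_cases h2 : y ∈ Set.Icc p.1 p.2
      · rw [ciSup_pos h2, hval p]
        have hμ : (volume (F ∩ Set.Icc p.1 p.2)).toReal ≤ p.2 - p.1 := by
          have h3 : volume (F ∩ Set.Icc p.1 p.2) ≤ volume (Set.Icc p.1 p.2) :=
            measure_mono Set.inter_subset_right
          have h4 : volume (Set.Icc p.1 p.2) = ENNReal.ofReal (p.2 - p.1) := Real.volume_Icc
          calc (volume (F ∩ Set.Icc p.1 p.2)).toReal
              ≤ (volume (Set.Icc p.1 p.2)).toReal :=
                ENNReal.toReal_mono (by rw [h4]; exact ENNReal.ofReal_ne_top) h3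
          _ = p.2 - p.1 := by rw [h4, ENNReal.toReal_ofReal (by linarith)]
        rw [inv_mul_le_iff₀ (by linarith)]
        linarith
      · haveI : IsEmpty (y ∈ Set.Icc p.1 p.2) := ⟨h2⟩
        rw [Real.iSup_of_isEmpty]
        norm_num
    · haveI : IsEmpty (p.1 < p.2) := ⟨h1⟩
      rw [Real.iSup_of_isEmpty]
      norm_num
  have hle : (B - A)⁻¹ * (volume (F ∩ Set.Icc A B)).toReal ≤
      (fun p : ℝ × ℝ => ⨆ (_ : p.1 < p.2) (_ : y ∈ Set.Icc p.1 p.2),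
        (p.2 - p.1)⁻¹ * ∫ x in Set.Icc p.1 p.2, |F.indicator (fun _ => (1:ℝ)) x|) (A, B) := by
    dsimp only
    rw [ciSup_pos (show (A, B).1 < (A, B).2 from hAB),
      ciSup_pos (show y ∈ Set.Icc (A, B).1 (A, B).2 from hy), hval (A, B)]
  exact le_trans hle (le_ciSup hbdd (A, B))

/-- Counting the stopping-time intervals (inequality (6.8)): there are absolute
constants `c, C > 0` such that for any finite family of pairwise disjoint
intervals `I_i = [a_i, b_i]` each satisfying
`(1/|I|) ∫ 1_F χ̃_I ≥ 2^{-n}` with `χ̃_I(x) = (1 + dist(x,I)/|I|)^{-10}`,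
every `I_i` lies in `{M(1_F) ≥ c 2^{-n}}` and `∑_i |I_i| ≤ C 2^n |F|`. -/
theorem stmt18 :
    ∃ c > (0 : ℝ), ∃ C > (0 : ℝ),
      ∀ (F : Set ℝ), MeasurableSet F → volume F < ⊤ →
      ∀ (n : ℤ) (ι : Type) (_ : Fintype ι) (a b : ι → ℝ),
        (∀ i, a i < b i) →
        (Set.univ.PairwiseDisjoint fun i => Set.Icc (a i) (b i)) →
        (∀ i, (2 : ℝ) ^ (-n) ≤ (b i - a i)⁻¹ *
          ∫ x : ℝ, F.indicator (fun _ => (1 : ℝ)) x *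
            (1 + Metric.infDist x (Set.Icc (a i) (b i)) / (b i - a i)) ^ (-(10 : ℝ))) →
        (∀ i, Set.Icc (a i) (b i) ⊆
            {x : ℝ | c * (2 : ℝ) ^ (-n) ≤
              hlMaximal (F.indicator (fun _ => (1 : ℝ))) x}) ∧
          ∑ i, (b i - a i) ≤ C * (2 : ℝ) ^ n * (volume F).toReal := by
  classical
  refine ⟨1/12, by norm_num, 48, by norm_num, ?_⟩
  intro F hF hFfin n ι _ a b hab hdisj hlow
  have ht : (0:ℝ) < (2:ℝ) ^ (-n) := zpow_pos (by norm_num) _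
  have hkey : ∀ i, ∃ k : ℕ, 1/12 * (2:ℝ)^(-n) * ((2*(k:ℝ)+3) * (b i - a i)) ≤
      (volume (F ∩ Set.Icc (a i - ((k:ℝ)+1)*(b i - a i)) (b i + ((k:ℝ)+1)*(b i - a i)))).toReal :=
    fun i => lemA F hF hFfin (a i) (b i) (hab i) _ ht (hlow i)
  choose k hk using hkey
  have hknn : ∀ i, (0:ℝ) ≤ (k i : ℝ) := fun i => Nat.cast_nonneg _
  have hABlt : ∀ i, a i - ((k i:ℝ)+1)*(b i - a i) < b i + ((k i:ℝ)+1)*(b i - a i) := by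
    intro i
    have h1 := hab i
    nlinarith [hknn i]
  have hsub : ∀ i, Set.Icc (a i) (b i) ⊆
      Set.Icc (a i - ((k i:ℝ)+1)*(b i - a i)) (b i + ((k i:ℝ)+1)*(b i - a i)) := by
    intro i
    apply Set.Icc_subset_Icc <;> nlinarith [hab i, hknn i]
  constructor
  · intro i y hy
    have hB := lemB F hF (hABlt i) (hsub i hy)
    refine Set.mem_setOf.2 (le_trans ?_ hB)
    have hlen : (b i + ((k i:ℝ)+1)*(b i - a i)) - (a i - ((k i:ℝ)+1)*(b i - a i)) =
        (2*(k i:ℝ)+3)*(b i - a i) := by ring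
    rw [hlen, inv_mul_eq_div, le_div_iff₀ (by nlinarith [hab i, hknn i])]
    exact hk i
  · -- sum bound
    set c : ι → ℝ := fun i => (a i + b i)/2 with hc
    set r : ι → ℝ := fun i => (2*(k i:ℝ)+3)/2 * (b i - a i) with hr
    have hball : ∀ i, Set.Icc (a i - ((k i:ℝ)+1)*(b i - a i)) (b i + ((k i:ℝ)+1)*(b i - a i)) =
        Metric.closedBall (c i) (r i) := by
      intro i
      rw [Real.closedBall_eq_Icc]
      congr 1 <;> simp only [hc, hr] <;> ring
    obtain ⟨R, hR⟩ : ∃ R : ℝ, ∀ i, r i ≤ R := by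
      obtain ⟨R, hR⟩ := (Set.finite_range r).bddAbove
      exact ⟨R, fun i => hR (Set.mem_range_self i)⟩
    obtain ⟨u, hu_sub, hu_disj, hu_cov⟩ :=
      Vitali.exists_disjoint_subfamily_covering_enlargement_closedBall Set.univ c r R
        (fun i _ => hR i) 4 (by norm_num)
    have hufin : u.Finite := Set.toFinite u
    set T := hufin.toFinset with hT
    have hTu : ∀ j, j ∈ T ↔ j ∈ u := fun j => hufin.mem_toFinset
    have hdisj' : Pairwise (Function.onFun Disjoint fun i => Set.Icc (a i) (b i)) :=
      fun i j hij => hdisj (Set.mem_univ i) (Set.mem_univ j) hij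
    have hsum : ∑ i, (b i - a i) = (volume (⋃ i, Set.Icc (a i) (b i))).toReal := by
      rw [measure_iUnion hdisj' fun i => measurableSet_Icc, tsum_fintype,
        ENNReal.toReal_sum (fun i _ => by simp [Real.volume_Icc])]
      apply Finset.sum_congr rfl
      intro i _
      rw [Real.volume_Icc, ENNReal.toReal_ofReal (by linarith [hab i])]
    have hcover : (⋃ i, Set.Icc (a i) (b i)) ⊆ ⋃ j ∈ T, Metric.closedBall (c j) (4 * r j) := by
      intro x hx
      obtain ⟨i, hxi⟩ := Set.mem_iUnion.1 hx
      obtain ⟨j, hj, hsubj⟩ := hu_cov i (Set.mem_univ i)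
      have hx2 : x ∈ Metric.closedBall (c i) (r i) := by
        rw [← hball i]; exact hsub i hxi
      exact Set.mem_biUnion ((hTu j).2 hj) (hsubj hx2)
    have hFcapfin : ∀ j, volume (F ∩ Metric.closedBall (c j) (r j)) ≠ ⊤ :=
      fun j => (lt_of_le_of_lt (measure_mono Set.inter_subset_left) hFfin).ne
    have hballF : ∀ j, volume (Metric.closedBall (c j) (r j)) ≤
        ENNReal.ofReal (12 * (2:ℝ)^n) * volume (F ∩ Metric.closedBall (c j) (r j)) := by
      intro j
      have h1 := hk j
      rw [← hball j]
      have hz : (2:ℝ)^n * (2:ℝ)^(-n) = 1 := by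
        rw [← zpow_add₀ (two_ne_zero)]
        simp
      have h3 : (2*(k j:ℝ)+3)*(b j - a j) ≤ 12*(2:ℝ)^n *
          (volume (F ∩ Set.Icc (a j - ((k j:ℝ)+1)*(b j - a j)) (b j + ((k j:ℝ)+1)*(b j - a j)))).toReal := by
        have h4 := mul_le_mul_of_nonneg_left h1 (show (0:ℝ) ≤ 12*(2:ℝ)^n by positivity)
        have h5 : (12:ℝ) * (2:ℝ)^n * (1/12 * (2:ℝ)^(-n) * ((2*(k j:ℝ)+3)*(b j - a j)))
            = (2*(k j:ℝ)+3)*(b j - a j) := by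
          linear_combination ((2*(k j:ℝ)+3)*(b j - a j)) * hz
        rw [h5] at h4
        linarith
      calc volume (Set.Icc (a j - ((k j:ℝ)+1)*(b j - a j)) (b j + ((k j:ℝ)+1)*(b j - a j)))
          = ENNReal.ofReal ((b j + ((k j:ℝ)+1)*(b j - a j)) - (a j - ((k j:ℝ)+1)*(b j - a j))) :=
            Real.volume_Icc
      _ ≤ ENNReal.ofReal (12*(2:ℝ)^n *
            (volume (F ∩ Set.Icc (a j - ((k j:ℝ)+1)*(b j - a j)) (b j + ((k j:ℝ)+1)*(b j - a j)))).toReal) := by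
            apply ENNReal.ofReal_le_ofReal
            calc (b j + ((k j:ℝ)+1)*(b j - a j)) - (a j - ((k j:ℝ)+1)*(b j - a j))
                = (2*(k j:ℝ)+3)*(b j - a j) := by ring
            _ ≤ _ := h3
      _ = ENNReal.ofReal (12*(2:ℝ)^n) *
            volume (F ∩ Set.Icc (a j - ((k j:ℝ)+1)*(b j - a j)) (b j + ((k j:ℝ)+1)*(b j - a j))) := by
            rw [ENNReal.ofReal_mul (by positivity), ENNReal.ofReal_toReal]
            rw [hball j]
            exact hFcapfin j
    have hdisjsum : ∑ j ∈ T, volume (F ∩ Metric.closedBall (c j) (r j)) ≤ volume F := by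
      rw [← measure_biUnion_finset ?_ fun j _ => hF.inter measurableSet_closedBall]
      · exact measure_mono (Set.iUnion₂_subset fun j _ => Set.inter_subset_left)
      · intro i hi j hj hij
        have := hu_disj ((hTu i).1 hi) ((hTu j).1 hj) hij
        exact this.mono Set.inter_subset_right Set.inter_subset_right
    have hchain : volume (⋃ i, Set.Icc (a i) (b i)) ≤
        4 * (ENNReal.ofReal (12*(2:ℝ)^n) * volume F) := by
      calc volume (⋃ i, Set.Icc (a i) (b i))
          ≤ volume (⋃ j ∈ T, Metric.closedBall (c j) (4 * r j)) := measure_mono hcover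
      _ ≤ ∑ j ∈ T, volume (Metric.closedBall (c j) (4 * r j)) := measure_biUnion_finset_le T _
      _ = ∑ j ∈ T, 4 * volume (Metric.closedBall (c j) (r j)) := by
            apply Finset.sum_congr rfl
            intro j _
            rw [Real.volume_closedBall, Real.volume_closedBall,
              show 2*(4*r j) = 4*(2*r j) by ring, ENNReal.ofReal_mul (by norm_num)]
            norm_num
      _ ≤ ∑ j ∈ T, 4 * (ENNReal.ofReal (12*(2:ℝ)^n) * volume (F ∩ Metric.closedBall (c j) (r j))) := by
            apply Finset.sum_le_sum
            intro j _
            exact mul_le_mul_right (hballF j) 4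
      _ = 4 * (ENNReal.ofReal (12*(2:ℝ)^n) * ∑ j ∈ T, volume (F ∩ Metric.closedBall (c j) (r j))) := by
            rw [← Finset.mul_sum, ← Finset.mul_sum]
      _ ≤ 4 * (ENNReal.ofReal (12*(2:ℝ)^n) * volume F) := by
            exact mul_le_mul_right (mul_le_mul_right hdisjsum _) 4
    rw [hsum]
    have hne : (4 : ENNReal) * (ENNReal.ofReal (12*(2:ℝ)^n) * volume F) ≠ ⊤ := by
      apply ENNReal.mul_ne_top (by norm_num)
      exact ENNReal.mul_ne_top ENNReal.ofReal_ne_top hFfin.ne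
    calc (volume (⋃ i, Set.Icc (a i) (b i))).toReal
        ≤ (4 * (ENNReal.ofReal (12*(2:ℝ)^n) * volume F)).toReal :=
          ENNReal.toReal_mono hne hchain
    _ = 48 * (2:ℝ)^n * (volume F).toReal := by
        rw [ENNReal.toReal_mul, ENNReal.toReal_mul, ENNReal.toReal_ofReal (by positivity)]
        norm_num
        ring
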